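/- For every k ≥ 1 there is a 2-edge-connected graph of order 3k+1 (namely a chain of k triangles sharing cut vertices consecutively) whose rainbow connection number equals 2k. -/

import Mathlib

open SimpleGraph

def IsRainbowColoring {V α : Type*} (G : SimpleGraph V) (c : Sym2 V → α) : Prop :=
  ∀ u v : V, ∃ p : G.Walk u v, p.IsPath ∧ (p.edges.map c).Nodup

noncomputable def rc {V : Type*} (G : SimpleGraph V) : ℕ :=
  sInf {t : ℕ | ∃ c : Sym2 V → Fin t, IsRainbowColoring G c}

def IsBlock {V : Type*} (G : SimpleGraph V) (B : Set V) : Prop :=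
  ((G.induce B).Connected ∧ ∀ v ∈ B, B ≠ {v} → (G.induce (B \ {v})).Connected) ∧
  ∀ B' : Set V, B ⊆ B' →
    ((G.induce B').Connected ∧ ∀ v ∈ B', B' ≠ {v} → (G.induce (B' \ {v})).Connected) →
    B' = B

def TwoConnected {V : Type*} (G : SimpleGraph V) : Prop :=
  G.Connected ∧ ∀ v : V, (G.induce {u | u ≠ v}).Connected

def TwoEdgeConnected {V : Type*} (G : SimpleGraph V) : Prop :=
  G.Connected ∧ ∀ e ∈ G.edgeSet, (G.deleteEdges {e}).Connected

def Gr (k : ℕ) : SimpleGraph (Fin (3*k+1)) where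
  Adj x y := (max x.val y.val = min x.val y.val + 1 ∧ min x.val y.val % 3 ≠ 1) ∨
             (max x.val y.val = min x.val y.val + 2 ∧ min x.val y.val % 3 ≠ 2)
  symm := by constructor; intro x y h; omega
  loopless := by constructor; intro x h; omega

lemma gr_adj {k : ℕ} (x y : Fin (3*k+1)) :
    (Gr k).Adj x y ↔ ((max x.val y.val = min x.val y.val + 1 ∧ min x.val y.val % 3 ≠ 1) ∨
             (max x.val y.val = min x.val y.val + 2 ∧ min x.val y.val % 3 ≠ 2)) := Iff.rfl

def cN (k : ℕ) : Sym2 (Fin (3*k+1)) → ℕ :=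
  Sym2.lift ⟨fun x y => 2 * (min x.val y.val / 3) +
      (if max x.val y.val = min x.val y.val + 2 then 1 else 0),
    by intro x y; dsimp only; rw [min_comm, max_comm]⟩

lemma cN_mk {k : ℕ} (x y : Fin (3*k+1)) :
    cN k s(x, y) = 2 * (min x.val y.val / 3) +
      (if max x.val y.val = min x.val y.val + 2 then 1 else 0) := rfl

def ff (u : ℕ) : ℕ := 2*(u/3) + (if u % 3 = 1 then 1 else 0)


lemma cN_val {k a b : ℕ} (h : a < b) (ha : a < 3*k+1) (hb : b < 3*k+1) :
    cN k s(⟨a,ha⟩, ⟨b,hb⟩) = 2*(a/3) + (if b = a+2 then 1 else 0) := by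
  rw [cN_mk]
  simp only [Fin.val_mk]
  rw [show a ⊓ b = a from by omega, show a ⊔ b = b from by omega]

lemma build (k : ℕ) : ∀ d : ℕ, ∀ u v : ℕ, ∀ (hu : u < v) (hv : v ≤ 3*k),
    v - u ≤ d → ¬(u % 3 = 1 ∧ v = u + 1) →
    ∃ p : (Gr k).Walk ⟨u, by omega⟩ ⟨v, by omega⟩,
      List.Chain' (· < ·) (p.support.map Fin.val) ∧
      List.Chain' (· < ·) (p.edges.map (cN k)) ∧
      ∀ x ∈ p.edges.map (cN k), ff u ≤ x := by
  intro d
  induction d using Nat.strong_induction_on with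
  | _ d ih =>
  intro u v hu hv hd hside
  -- choose next vertex
  by_cases hone : v = u + 1
  · -- single step, u % 3 ≠ 1
    subst hone
    have hadj : (Gr k).Adj ⟨u, by omega⟩ ⟨u+1, by omega⟩ := by
      rw [gr_adj]; simp only []; omega
    refine ⟨Walk.cons hadj Walk.nil, ?_, ?_, ?_⟩
    · simp [Walk.support_cons, List.Chain']
    · simp [List.Chain']
    · intro x hx
      simp only [Walk.edges_cons, Walk.edges_nil, List.map_cons, List.map_nil,
        List.mem_singleton, cN_mk] at hx
      rw [show u ⊓ (u+1) = u from by omega, show u ⊔ (u+1) = u+1 from by omega] at hx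
      subst hx
      unfold ff
      split_ifs with h1 h2 <;> omega
  · -- v ≥ u + 2
    have hv2 : u + 2 ≤ v := by omega
    rcases show u % 3 = 0 ∨ u % 3 = 1 ∨ u % 3 = 2 from by omega with hu3 | hu3 | hu3
    · by_cases htwo : v = u + 2
      · subst htwo
        have hadj : (Gr k).Adj (⟨u, by omega⟩ : Fin (3*k+1)) ⟨u+2, by omega⟩ := by
          rw [gr_adj]; simp only [Fin.val_mk]; omega
        refine ⟨Walk.cons hadj Walk.nil, ?_, ?_, ?_⟩
        · simp [Walk.support_cons, List.Chain']
        · simp [List.Chain']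
        · intro x hx
          simp only [Walk.edges_cons, Walk.edges_nil, List.map_cons, List.map_nil,
            List.mem_singleton, cN_mk] at hx
          rw [show u ⊓ (u+2) = u from by omega, show u ⊔ (u+2) = u+2 from by omega] at hx
          subst hx
          unfold ff
          split_ifs <;> omega
      ·
        obtain ⟨p, hs, hc, hf⟩ := ih (v - (u+1)) (by omega) (u+1) v (by omega) hv (by omega) (by omega)
        have hadj : (Gr k).Adj (⟨u, by omega⟩ : Fin (3*k+1)) ⟨u+1, by omega⟩ := by
          rw [gr_adj]; simp only [Fin.val_mk]; omega
        have hcval : cN k s((⟨u, by omega⟩ : Fin (3*k+1)), ⟨u+1, by omega⟩) =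
            2*(u/3) + (if (u+1) = u + 2 then 1 else 0) := by
          rw [cN_mk]
          rw [show u ⊓ (u+1) = u from by omega, show u ⊔ (u+1) = u+1 from by omega]
        refine ⟨Walk.cons hadj p, ?_, ?_, ?_⟩
        · have hs2 := hs
          rw [p.support_eq_cons, List.map_cons] at hs2
          rw [Walk.support_cons, p.support_eq_cons, List.map_cons, List.map_cons]
          dsimp only [List.Chain']; rw [List.isChain_cons_cons]
          exact ⟨by omega, hs2⟩
        · rw [Walk.edges_cons, List.map_cons]; dsimp only [List.Chain']; rw [List.isChain_cons]
          refine ⟨?_, hc⟩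
          intro b hb
          have hbmem : b ∈ p.edges.map (cN k) := List.mem_of_mem_head? hb
          have hfb := hf b hbmem
          rw [hcval]
          unfold ff at hfb
          split_ifs at hfb ⊢ <;> omega
        · intro x hx
          rw [Walk.edges_cons, List.map_cons, List.mem_cons] at hx
          rcases hx with hx | hx
          · rw [hcval] at hx
            subst hx
            unfold ff
            split_ifs <;> omega
          · have hfb := hf x hx
            unfold ff at hfb ⊢
            split_ifs at hfb ⊢ <;> omega
    · by_cases htwo : v = u + 2
      · subst htwo
        have hadj : (Gr k).Adj (⟨u, by omega⟩ : Fin (3*k+1)) ⟨u+2, by omega⟩ := by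
          rw [gr_adj]; simp only [Fin.val_mk]; omega
        refine ⟨Walk.cons hadj Walk.nil, ?_, ?_, ?_⟩
        · simp [Walk.support_cons, List.Chain']
        · simp [List.Chain']
        · intro x hx
          simp only [Walk.edges_cons, Walk.edges_nil, List.map_cons, List.map_nil,
            List.mem_singleton, cN_mk] at hx
          rw [show u ⊓ (u+2) = u from by omega, show u ⊔ (u+2) = u+2 from by omega] at hx
          subst hx
          unfold ff
          split_ifs <;> omega
      ·
        obtain ⟨p, hs, hc, hf⟩ := ih (v - (u+2)) (by omega) (u+2) v (by omega) hv (by omega) (by omega)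
        have hadj : (Gr k).Adj (⟨u, by omega⟩ : Fin (3*k+1)) ⟨u+2, by omega⟩ := by
          rw [gr_adj]; simp only [Fin.val_mk]; omega
        have hcval : cN k s((⟨u, by omega⟩ : Fin (3*k+1)), ⟨u+2, by omega⟩) =
            2*(u/3) + (if (u+2) = u + 2 then 1 else 0) := by
          rw [cN_mk]
          rw [show u ⊓ (u+2) = u from by omega, show u ⊔ (u+2) = u+2 from by omega]
        refine ⟨Walk.cons hadj p, ?_, ?_, ?_⟩
        · have hs2 := hs
          rw [p.support_eq_cons, List.map_cons] at hs2
          rw [Walk.support_cons, p.support_eq_cons, List.map_cons, List.map_cons]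
          dsimp only [List.Chain']; rw [List.isChain_cons_cons]
          exact ⟨by omega, hs2⟩
        · rw [Walk.edges_cons, List.map_cons]; dsimp only [List.Chain']; rw [List.isChain_cons]
          refine ⟨?_, hc⟩
          intro b hb
          have hbmem : b ∈ p.edges.map (cN k) := List.mem_of_mem_head? hb
          have hfb := hf b hbmem
          rw [hcval]
          unfold ff at hfb
          split_ifs at hfb ⊢ <;> omega
        · intro x hx
          rw [Walk.edges_cons, List.map_cons, List.mem_cons] at hx
          rcases hx with hx | hx
          · rw [hcval] at hx
            subst hx
            unfold ff
            split_ifs <;> omega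
          · have hfb := hf x hx
            unfold ff at hfb ⊢
            split_ifs at hfb ⊢ <;> omega
    ·
      obtain ⟨p, hs, hc, hf⟩ := ih (v - (u+1)) (by omega) (u+1) v (by omega) hv (by omega) (by omega)
      have hadj : (Gr k).Adj (⟨u, by omega⟩ : Fin (3*k+1)) ⟨u+1, by omega⟩ := by
        rw [gr_adj]; simp only [Fin.val_mk]; omega
      have hcval : cN k s((⟨u, by omega⟩ : Fin (3*k+1)), ⟨u+1, by omega⟩) =
          2*(u/3) + (if (u+1) = u + 2 then 1 else 0) := by
        rw [cN_mk]
        rw [show u ⊓ (u+1) = u from by omega, show u ⊔ (u+1) = u+1 from by omega]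
      refine ⟨Walk.cons hadj p, ?_, ?_, ?_⟩
      · have hs2 := hs
        rw [p.support_eq_cons, List.map_cons] at hs2
        rw [Walk.support_cons, p.support_eq_cons, List.map_cons, List.map_cons]
        dsimp only [List.Chain']; rw [List.isChain_cons_cons]
        exact ⟨by omega, hs2⟩
      · rw [Walk.edges_cons, List.map_cons]; dsimp only [List.Chain']; rw [List.isChain_cons]
        refine ⟨?_, hc⟩
        intro b hb
        have hbmem : b ∈ p.edges.map (cN k) := List.mem_of_mem_head? hb
        have hfb := hf b hbmem
        rw [hcval]
        unfold ff at hfb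
        split_ifs at hfb ⊢ <;> omega
      · intro x hx
        rw [Walk.edges_cons, List.map_cons, List.mem_cons] at hx
        rcases hx with hx | hx
        · rw [hcval] at hx
          subst hx
          unfold ff
          split_ifs <;> omega
        · have hfb := hf x hx
          unfold ff at hfb ⊢
          split_ifs at hfb ⊢ <;> omega

lemma half (k : ℕ) (u v : Fin (3*k+1)) (hlt : u.val < v.val) :
    ∃ p : (Gr k).Walk u v, p.IsPath ∧ (p.edges.map (cN k)).Nodup := by
  by_cases hsp : u.val % 3 = 1 ∧ v.val = u.val + 1
  · -- special path u -> u-1 -> v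
    obtain ⟨h1, h2⟩ := hsp
    have hw : u.val - 1 < 3*k+1 := by omega
    have hwv : (⟨u.val - 1, hw⟩ : Fin (3*k+1)).val = u.val - 1 := rfl
    have ha1 : (Gr k).Adj u ⟨u.val - 1, hw⟩ := by
      rw [gr_adj]; omega
    have ha2 : (Gr k).Adj (⟨u.val - 1, hw⟩ : Fin (3*k+1)) v := by
      rw [gr_adj]; omega
    have e1 : u ≠ ⟨u.val - 1, hw⟩ := fun h => by
      have := congrArg Fin.val h; omega
    have e2 : u ≠ v := fun h => by
      have := congrArg Fin.val h; omega
    have e3 : (⟨u.val - 1, hw⟩ : Fin (3*k+1)) ≠ v := fun h => by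
      have := congrArg Fin.val h; omega
    have c1 : cN k s(u, ⟨u.val - 1, hw⟩) = 2*((u.val-1)/3) := by
      rw [cN_mk, hwv, show u.val ⊓ (u.val - 1) = u.val - 1 from by omega,
        show u.val ⊔ (u.val - 1) = u.val from by omega]
      split_ifs <;> omega
    have c2 : cN k s((⟨u.val - 1, hw⟩ : Fin (3*k+1)), v) = 2*((u.val-1)/3) + 1 := by
      rw [cN_mk, hwv, show (u.val - 1) ⊓ v.val = u.val - 1 from by omega,
        show (u.val - 1) ⊔ v.val = v.val from by omega]
      split_ifs <;> omega
    refine ⟨Walk.cons ha1 (Walk.cons ha2 Walk.nil), ?_, ?_⟩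
    · rw [Walk.isPath_def]
      simp [e1, e2, e3]
    · simp only [Walk.edges_cons, Walk.edges_nil, List.map_cons, List.map_nil, c1, c2]
      simp only [List.nodup_cons, List.mem_cons, List.mem_singleton, List.not_mem_nil,
        or_false, List.nodup_nil, and_true, List.not_mem_nil, not_false_iff]
      omega
  · obtain ⟨p, hs, hc, hf⟩ := build k (v.val - u.val) u.val v.val hlt (by omega) le_rfl hsp
    refine ⟨p, ?_, ?_⟩
    · rw [Walk.isPath_def]
      have hpn : (p.support.map Fin.val).Nodup :=
        (List.isChain_iff_pairwise.mp hs).nodup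
      exact hpn.of_map Fin.val
    · exact (List.isChain_iff_pairwise.mp hc).nodup

lemma exists_good (k : ℕ) (u v : Fin (3*k+1)) :
    ∃ p : (Gr k).Walk u v, p.IsPath ∧ (p.edges.map (cN k)).Nodup := by
  rcases lt_trichotomy u.val v.val with h | h | h
  · exact half k u v h
  · have : u = v := Fin.ext h
    subst this
    exact ⟨Walk.nil, Walk.IsPath.nil, by simp⟩
  · obtain ⟨p, hp, hc⟩ := half k v u h
    refine ⟨p.reverse, hp.reverse, ?_⟩
    rw [Walk.edges_reverse, List.map_reverse]
    exact List.nodup_reverse.mpr hc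

lemma cN_lt_of_edge (k : ℕ) (hk : 1 ≤ k) {e : Sym2 (Fin (3*k+1))} (he : e ∈ (Gr k).edgeSet) :
    cN k e < 2*k := by
  induction e using Sym2.ind with
  | _ x y =>
    rw [mem_edgeSet, gr_adj] at he
    rw [cN_mk]
    have hx := x.isLt
    have hy := y.isLt
    split_ifs <;> omega

noncomputable def col (k : ℕ) (hk : 1 ≤ k) : Sym2 (Fin (3*k+1)) → Fin (2*k) :=
  fun e => ⟨cN k e % (2*k), Nat.mod_lt _ (by omega)⟩

lemma rainbow (k : ℕ) (hk : 1 ≤ k) : IsRainbowColoring (Gr k) (col k hk) := by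
  intro u v
  obtain ⟨p, hp, hc⟩ := exists_good k u v
  refine ⟨p, hp, ?_⟩
  have hval : (p.edges.map (col k hk)).map Fin.val = p.edges.map (cN k) := by
    rw [List.map_map]
    apply List.map_congr_left
    intro e he
    have : cN k e < 2*k := cN_lt_of_edge k hk (p.edges_subset_edgeSet he)
    simp [col, Nat.mod_eq_of_lt this]
  have : ((p.edges.map (col k hk)).map Fin.val).Nodup := by rw [hval]; exact hc
  exact this.of_map Fin.val

def phi (u : ℕ) : ℕ := 2*(u/3) + (if u % 3 = 0 then 0 else 1)

lemma phi_adj {k : ℕ} {x y : Fin (3*k+1)} (h : (Gr k).Adj x y) :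
    phi y.val ≤ phi x.val + 1 := by
  rw [gr_adj] at h
  unfold phi
  split_ifs <;> omega

lemma phi_walk {k : ℕ} {x y : Fin (3*k+1)} (p : (Gr k).Walk x y) :
    phi y.val ≤ phi x.val + p.length := by
  induction p with
  | nil => simp
  | cons h q ih =>
    have := phi_adj h
    rw [Walk.length_cons]
    omega

lemma rc_lower (k : ℕ) (hk : 1 ≤ k) {t : ℕ} (c : Sym2 (Fin (3*k+1)) → Fin t)
    (hc : IsRainbowColoring (Gr k) c) : 2*k ≤ t := by
  obtain ⟨p, hp, hnd⟩ := hc ⟨0, by omega⟩ ⟨3*k, by omega⟩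
  have hlen : (p.edges.map c).length ≤ t := by
    have := hnd.length_le_card
    simpa using this
  rw [List.length_map, Walk.length_edges] at hlen
  have := phi_walk p
  have h3 : (3*k)/3 = k := by omega
  have h0 : 3*k % 3 = 0 := by omega
  simp only [phi, Fin.val_mk, h3, h0, Nat.zero_div, Nat.zero_mod, if_pos rfl] at this
  omega

lemma rc_eq (k : ℕ) (hk : 1 ≤ k) : rc (Gr k) = 2*k := by
  unfold rc
  have hmem : 2*k ∈ {t : ℕ | ∃ c : Sym2 (Fin (3*k+1)) → Fin t, IsRainbowColoring (Gr k) c} :=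
    ⟨col k hk, rainbow k hk⟩
  apply le_antisymm
  · exact Nat.sInf_le hmem
  · apply le_csInf ⟨2*k, hmem⟩
    rintro t ⟨c, hc⟩
    exact rc_lower k hk c hc

lemma detour (k : ℕ) (x y : Fin (3*k+1)) (hxy : (Gr k).Adj x y) (hlt : x.val < y.val) :
    ((Gr k).deleteEdges {s(x,y)}).Reachable x y := by
  set G' := (Gr k).deleteEdges {s(x,y)} with hG'
  have hy := y.isLt
  have hx := x.isLt
  have step : ∀ (p q : Fin (3*k+1)), (Gr k).Adj p q →
      (p.val ≠ x.val ∨ q.val ≠ y.val) → (p.val ≠ y.val ∨ q.val ≠ x.val) → G'.Adj p q := by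
    intro p q hadj h1 h2
    rw [hG', deleteEdges_adj]
    refine ⟨hadj, ?_⟩
    simp only [Set.mem_singleton_iff, Sym2.eq_iff]
    rintro (⟨h3, h4⟩ | ⟨h3, h4⟩) <;> rw [Fin.ext_iff] at h3 h4 <;>
      rcases h1 with h1 | h1 <;> rcases h2 with h2 | h2 <;> omega
  have H := hxy
  rw [gr_adj, show x.val ⊓ y.val = x.val from by omega,
    show x.val ⊔ y.val = y.val from by omega] at H
  rcases show (y.val = x.val + 1 ∧ x.val % 3 = 0) ∨ (y.val = x.val + 1 ∧ x.val % 3 = 2) ∨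
      (y.val = x.val + 2 ∧ x.val % 3 = 0) ∨ (y.val = x.val + 2 ∧ x.val % 3 = 1) from by
        omega with ⟨hb, ha⟩ | ⟨hb, ha⟩ | ⟨hb, ha⟩ | ⟨hb, ha⟩
  · have A1 : G'.Adj x ⟨x.val+2, by omega⟩ := step x ⟨x.val+2, by omega⟩
      (by rw [gr_adj]; simp only [Fin.val_mk]; omega) (by simp only [Fin.val_mk]; omega)
      (by simp only [Fin.val_mk]; omega)
    have A2 : G'.Adj (⟨x.val+2, by omega⟩ : Fin (3*k+1)) ⟨x.val+3, by omega⟩ :=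
      step _ _ (by rw [gr_adj]; simp only [Fin.val_mk]; omega)
      (by simp only [Fin.val_mk]; omega) (by simp only [Fin.val_mk]; omega)
    have A3 : G'.Adj (⟨x.val+3, by omega⟩ : Fin (3*k+1)) y := step _ _
      (by rw [gr_adj]; simp only [Fin.val_mk]; omega) (by simp only [Fin.val_mk]; omega)
      (by simp only [Fin.val_mk]; omega)
    exact ⟨Walk.cons A1 (Walk.cons A2 (Walk.cons A3 Walk.nil))⟩
  · have A1 : G'.Adj x ⟨x.val-2, by omega⟩ := step x ⟨x.val-2, by omega⟩
      (by rw [gr_adj]; simp only [Fin.val_mk]; omega) (by simp only [Fin.val_mk]; omega)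
      (by simp only [Fin.val_mk]; omega)
    have A2 : G'.Adj (⟨x.val-2, by omega⟩ : Fin (3*k+1)) ⟨x.val-1, by omega⟩ :=
      step _ _ (by rw [gr_adj]; simp only [Fin.val_mk]; omega)
      (by simp only [Fin.val_mk]; omega) (by simp only [Fin.val_mk]; omega)
    have A3 : G'.Adj (⟨x.val-1, by omega⟩ : Fin (3*k+1)) y := step _ _
      (by rw [gr_adj]; simp only [Fin.val_mk]; omega) (by simp only [Fin.val_mk]; omega)
      (by simp only [Fin.val_mk]; omega)
    exact ⟨Walk.cons A1 (Walk.cons A2 (Walk.cons A3 Walk.nil))⟩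
  · have A1 : G'.Adj x ⟨x.val+1, by omega⟩ := step x ⟨x.val+1, by omega⟩
      (by rw [gr_adj]; simp only [Fin.val_mk]; omega) (by simp only [Fin.val_mk]; omega)
      (by simp only [Fin.val_mk]; omega)
    have A2 : G'.Adj (⟨x.val+1, by omega⟩ : Fin (3*k+1)) ⟨x.val+3, by omega⟩ :=
      step _ _ (by rw [gr_adj]; simp only [Fin.val_mk]; omega)
      (by simp only [Fin.val_mk]; omega) (by simp only [Fin.val_mk]; omega)
    have A3 : G'.Adj (⟨x.val+3, by omega⟩ : Fin (3*k+1)) y := step _ _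
      (by rw [gr_adj]; simp only [Fin.val_mk]; omega) (by simp only [Fin.val_mk]; omega)
      (by simp only [Fin.val_mk]; omega)
    exact ⟨Walk.cons A1 (Walk.cons A2 (Walk.cons A3 Walk.nil))⟩
  · have A1 : G'.Adj x ⟨x.val-1, by omega⟩ := step x ⟨x.val-1, by omega⟩
      (by rw [gr_adj]; simp only [Fin.val_mk]; omega) (by simp only [Fin.val_mk]; omega)
      (by simp only [Fin.val_mk]; omega)
    have A2 : G'.Adj (⟨x.val-1, by omega⟩ : Fin (3*k+1)) ⟨x.val+1, by omega⟩ :=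
      step _ _ (by rw [gr_adj]; simp only [Fin.val_mk]; omega)
      (by simp only [Fin.val_mk]; omega) (by simp only [Fin.val_mk]; omega)
    have A3 : G'.Adj (⟨x.val+1, by omega⟩ : Fin (3*k+1)) y := step _ _
      (by rw [gr_adj]; simp only [Fin.val_mk]; omega) (by simp only [Fin.val_mk]; omega)
      (by simp only [Fin.val_mk]; omega)
    exact ⟨Walk.cons A1 (Walk.cons A2 (Walk.cons A3 Walk.nil))⟩

lemma reach_transfer {V : Type*} {G H : SimpleGraph V}
    (hadj : ∀ a b, G.Adj a b → H.Reachable a b) {u v : V} (p : G.Walk u v) :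
    H.Reachable u v := by
  induction p with
  | nil => exact Reachable.refl _
  | cons h q ih => exact (hadj _ _ h).trans ih

lemma gr_connected (k : ℕ) : (Gr k).Connected := by
  rw [connected_iff]
  refine ⟨fun u v => ?_, ⟨⟨0, by omega⟩⟩⟩
  obtain ⟨p, _, _⟩ := exists_good k u v
  exact ⟨p⟩

lemma gr_del_connected (k : ℕ) (e : Sym2 (Fin (3*k+1))) (he : e ∈ (Gr k).edgeSet) :
    ((Gr k).deleteEdges {e}).Connected := by
  rw [connected_iff]
  refine ⟨fun u v => ?_, ⟨⟨0, by omega⟩⟩⟩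
  obtain ⟨p, _, _⟩ := exists_good k u v
  refine reach_transfer ?_ p
  intro a b hab
  by_cases hme : s(a,b) = e
  · rw [← hme]
    rcases lt_trichotomy a.val b.val with h | h | h
    · exact detour k a b hab h
    · exact absurd (Fin.ext h) hab.ne
    · have := detour k b a hab.symm h
      rw [Sym2.eq_swap] at this
      exact this.symm
  · refine Adj.reachable ?_
    rw [deleteEdges_adj]
    exact ⟨hab, by simpa using hme⟩


theorem exists_tight_two_edge_connected (k : ℕ) (hk : 1 ≤ k) :
    ∃ G : SimpleGraph (Fin (3 * k + 1)), TwoEdgeConnected G ∧ rc G = 2 * k :=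
  ⟨Gr k, ⟨gr_connected k, fun e he => gr_del_connected k e he⟩, rc_eq k hk⟩
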